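/- Let G be an outerplanar graph embedded with all vertices on the outer cycle C, and let 𝓗 be a family of connected subgraphs of G that is non-piercing (all pairwise differences of vertex sets induce connected subgraphs of G). Then the cycle system (C, 𝓗) is axax-free: there do not exist H, H' ∈ 𝓗 and four distinct vertices a₁, x₁, a₂, x₂ appearing in this cyclic order on C with a₁, a₂ ∈ V(H) \ V(H') and x₁, x₂ ∈ V(H'). -/

import Mathlib

open scoped ENNReal

/-- A tree decomposition of a graph `G`: a tree `T` with bags `bag i ⊆ V` such that
every vertex appears in a bag, every edge lies in a bag, and the bags containing a
fixed vertex form a connected subtree. -/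
def IsTreeDecomp {V ι : Type} (G : SimpleGraph V) (T : SimpleGraph ι) (bag : ι → Set V) : Prop :=
  T.IsTree ∧ (∀ v, ∃ i, v ∈ bag i) ∧
    (∀ u v, G.Adj u v → ∃ i, u ∈ bag i ∧ v ∈ bag i) ∧
    (∀ v, (T.induce {i | v ∈ bag i}).Connected)

/-- Width of a tree decomposition: (max bag size) − 1. -/
noncomputable def decompWidth {V ι : Type} (bag : ι → Set V) : ℕ∞ :=
  (⨆ i, (bag i).encard) - 1

/-- Treewidth: the infimum of widths of tree decompositions. -/
noncomputable def treewidth {V : Type} (G : SimpleGraph V) : ℕ∞ :=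
  sInf {w : ℕ∞ | ∃ (ι : Type) (T : SimpleGraph ι) (bag : ι → Set V),
    IsTreeDecomp G T bag ∧ w = decompWidth bag}

/-- A family of vertex sets is non-piercing in `G` if every pairwise difference
(when nonempty) induces a connected subgraph of `G`. -/
def NonPiercing {V : Type} (G : SimpleGraph V) (F : Set (Set V)) : Prop :=
  ∀ H ∈ F, ∀ H' ∈ F, (H \ H').Nonempty → (G.induce (H \ H')).Connected

/-- Outerplanarity via a one-page (circular, non-crossing) layout. -/
def Outerplanar {α : Type} (Q : SimpleGraph α) : Prop :=
  ∃ f : α → ℕ, Function.Injective f ∧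
    ∀ a b c d : α, Q.Adj a b → Q.Adj c d →
      ¬ (f a < f c ∧ f c < f b ∧ f b < f d)

/-- `a, b, c` appear in this (clockwise) cyclic order on the cycle `Fin n`. -/
def Cyc3 {n : ℕ} (a b c : Fin n) : Prop :=
  (a < b ∧ b < c) ∨ (b < c ∧ c < a) ∨ (c < a ∧ a < b)

/-- `a, b, c, d` appear in this (clockwise) cyclic order on the cycle `Fin n`. -/
def Cyc4 {n : ℕ} (a b c d : Fin n) : Prop :=
  (a < b ∧ b < c ∧ c < d) ∨ (b < c ∧ c < d ∧ d < a) ∨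
    (c < d ∧ d < a ∧ a < b) ∨ (d < a ∧ a < b ∧ b < c)

/-- Open arc of vertices strictly between `u` and `v` clockwise. -/
def arcO {n : ℕ} (u v : Fin n) : Set (Fin n) := {w | Cyc3 u w v}

/-- Closed arc of vertices from `u` to `v` clockwise (inclusive). -/
def arcC {n : ℕ} (u v : Fin n) : Set (Fin n) := {u} ∪ {v} ∪ {w | Cyc3 u w v}

/-- The cycle system is `axax`-free. -/
def AxaxFree {n : ℕ} (F : Set (Set (Fin n))) : Prop :=
  ¬ ∃ H ∈ F, ∃ H' ∈ F, ∃ a₁ x₁ a₂ x₂ : Fin n,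
    Cyc4 a₁ x₁ a₂ x₂ ∧ a₁ ∈ H \ H' ∧ a₂ ∈ H \ H' ∧ x₁ ∈ H' ∧ x₂ ∈ H'

/-- The cycle system is `abab`-free. -/
def AbabFree {n : ℕ} (F : Set (Set (Fin n))) : Prop :=
  ¬ ∃ H ∈ F, ∃ H' ∈ F, ∃ a₁ b₁ a₂ b₂ : Fin n,
    Cyc4 a₁ b₁ a₂ b₂ ∧ a₁ ∈ H \ H' ∧ a₂ ∈ H \ H' ∧ b₁ ∈ H' \ H ∧ b₂ ∈ H' \ H

/-- The vertices appearing in bags of the component of `T` minus the edge `{x,y}`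
that contains `x` (the `x`-side of the tree decomposition). -/
def sideVerts {V ι : Type} (T : SimpleGraph ι) (bag : ι → Set V) (x y : ι) : Set V :=
  ⋃ i ∈ {i | (T.deleteEdges {s(x, y)}).Reachable x i}, bag i

/-- Adjacency in the `N × N` grid graph. -/
def gridAdj {N : ℕ} (p q : Fin N × Fin N) : Prop :=
  (p.1 = q.1 ∧ (p.2.val + 1 = q.2.val ∨ q.2.val + 1 = p.2.val)) ∨
    (p.2 = q.2 ∧ (p.1.val + 1 = q.1.val ∨ q.1.val + 1 = p.1.val))

/-- Clockwise distance from `b` to `a` on the cycle `Fin n`. -/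
def relpos {n : ℕ} (a b : Fin n) : ℕ := (a.val + n - b.val) % n

/-- Lexicographic comparison on pairs of naturals. -/
def lexLe (p q : ℕ × ℕ) : Prop := p.1 < q.1 ∨ (p.1 = q.1 ∧ p.2 ≤ q.2)

/-- A set of indices forming a (possibly empty) cyclic interval of `Fin m`. -/
def CycInterval {m : ℕ} (S : Set (Fin m)) : Prop := S = ∅ ∨ ∃ i j : Fin m, S = arcC i j

/-- Maximal elements of a family of sets under inclusion. -/
def maxElems {X : Type} (F : Set (Set X)) : Set (Set X) :=
  {H ∈ F | ∀ H' ∈ F, H ⊆ H' → H = H'}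


lemma relpos_eq' {n : ℕ} (a d : Fin n) :
    relpos a d = if d.val ≤ a.val then a.val - d.val else a.val + n - d.val := by
  have ha := a.isLt; have hd := d.isLt
  unfold relpos
  split
  · rw [show a.val + n - d.val = (a.val - d.val) + n by omega, Nat.add_mod_right]
    exact Nat.mod_eq_of_lt (by omega)
  · exact Nat.mod_eq_of_lt (by omega)

lemma relpos_inj' {n : ℕ} {a b d : Fin n} (h : relpos a d = relpos b d) : a = b := by
  have ha := a.isLt; have hb := b.isLt; have hd := d.isLt
  rw [relpos_eq', relpos_eq'] at h
  apply Fin.ext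
  split_ifs at h <;> omega

lemma relpos_pos' {n : ℕ} {a d : Fin n} (h : a ≠ d) : 0 < relpos a d := by
  have ha := a.isLt; have hd := d.isLt
  rw [relpos_eq']
  have : a.val ≠ d.val := fun hh => h (Fin.ext hh)
  split_ifs <;> omega

lemma cyc4_iff' {n : ℕ} (a b c d : Fin n) :
    Cyc4 a b c d ↔ (0 < relpos a d ∧ relpos a d < relpos b d ∧ relpos b d < relpos c d) := by
  have ha := a.isLt; have hb := b.isLt; have hc := c.isLt; have hd := d.isLt
  simp only [Cyc4, Fin.lt_def, relpos_eq']
  split_ifs <;> omega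

lemma cyc4_rot' {n : ℕ} {a b c d : Fin n} (h : Cyc4 a b c d) : Cyc4 d a b c := by
  unfold Cyc4 at *; tauto

lemma cross' {n : ℕ} {G : SimpleGraph (Fin n)} (f : Fin n → ℕ) (t : ℕ) :
    ∀ {a b : Fin n} (W : G.Walk a b), (∀ w ∈ W.support, f w ≠ t) → f a < t → t < f b →
    ∃ u v, G.Adj u v ∧ u ∈ W.support ∧ v ∈ W.support ∧ f u < t ∧ t < f v := by
  intro a b W
  induction W with
  | nil => intro _ ha hb; omega
  | @cons a a' b h W ih =>
    intro hsup ha hb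
    by_cases hc : f a' < t
    · obtain ⟨u, v, h1, h2, h3, h4, h5⟩ :=
        ih (fun w hw => hsup w (by simp [hw])) hc hb
      exact ⟨u, v, h1, by simp [h2], by simp [h3], h4, h5⟩
    · have hne : f a' ≠ t := hsup a' (by simp)
      exact ⟨a, a', h, by simp, by simp, ha, lt_of_le_of_ne (not_lt.mp hc) (Ne.symm hne)⟩

lemma walk_in_set' {n : ℕ} {G : SimpleGraph (Fin n)} {S : Set (Fin n)}
    (hS : (G.induce S).Connected) {u v : Fin n} (hu : u ∈ S) (hv : v ∈ S) :
    ∃ W : G.Walk u v, ∀ w ∈ W.support, w ∈ S := by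
  obtain ⟨p⟩ := hS.preconnected ⟨u, hu⟩ ⟨v, hv⟩
  refine ⟨p.map (SimpleGraph.Embedding.induce S).toHom, ?_⟩
  intro w hw
  replace hw : w ∈ (p.map (SimpleGraph.Embedding.induce S).toHom).support := hw
  rw [SimpleGraph.Walk.support_map, List.mem_map] at hw
  obtain ⟨x, _, rfl⟩ := hw
  exact x.2

theorem stmt10 (n : ℕ) [NeZero n] (hn : 3 ≤ n) (G : SimpleGraph (Fin n))
    (hcycle : ∀ i : Fin n, G.Adj i (i + 1))
    (hnoncross : ∀ a b c d : Fin n, G.Adj a b → G.Adj c d → ¬ Cyc4 a c b d)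
    (𝓗 : Set (Set (Fin n)))
    (hconn : ∀ H ∈ 𝓗, (G.induce H).Connected)
    (hnp : NonPiercing G 𝓗) :
    AxaxFree 𝓗 := by

  rintro ⟨H, hH, H', hH', a₁, x₁, a₂, x₂, hc, ⟨ha₁H, ha₁H'⟩, ⟨ha₂H, ha₂H'⟩, hx₁, hx₂⟩
  -- walk in H \ H' from a₁ to a₂
  have hA : (G.induce (H \ H')).Connected := hnp H hH H' hH' ⟨a₁, ha₁H, ha₁H'⟩
  obtain ⟨W, hW⟩ := walk_in_set' hA ⟨ha₁H, ha₁H'⟩ ⟨ha₂H, ha₂H'⟩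
  -- relpos chain from base x₂
  obtain ⟨h0, h1, h2⟩ := (cyc4_iff' a₁ x₁ a₂ x₂).mp hc
  obtain ⟨u, v, huv, huW, hvW, hu1, hv1⟩ :=
    cross' (fun w => relpos w x₂) (relpos x₁ x₂) W
      (fun w hw heq => (hW w hw).2 (relpos_inj' heq ▸ hx₁)) h1 h2
  have huA := hW u huW
  have hvA := hW v hvW
  have hu0 : 0 < relpos u x₂ := relpos_pos' (fun h => huA.2 (h ▸ hx₂))
  have hcy : Cyc4 u x₁ v x₂ := (cyc4_iff' u x₁ v x₂).mpr ⟨hu0, hu1, hv1⟩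
  -- walk in H' from x₂ to x₁
  obtain ⟨Q, hQ⟩ := walk_in_set' (hconn H' hH') hx₂ hx₁
  obtain ⟨s0, s1, s2⟩ := (cyc4_iff' x₂ u x₁ v).mp (cyc4_rot' hcy)
  obtain ⟨p, q, hpq, hpQ, hqQ, hp1, hq1⟩ :=
    cross' (fun w => relpos w v) (relpos u v) Q
      (fun w hw heq => (huA.2 : u ∉ H') (relpos_inj' heq ▸ hQ w hw)) s1 s2
  have hp0 : 0 < relpos p v := relpos_pos' (fun h => hvA.2 (h ▸ hQ p hpQ))
  have hcy2 : Cyc4 p u q v := (cyc4_iff' p u q v).mpr ⟨hp0, hp1, hq1⟩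
  exact hnoncross p q u v hpq huv hcy2
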